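/- Let δ be a real number with 0 < δ < √2 − 1. There exist constants C₁, C₂ > 0 depending only on δ with the following property: for any M, K, s ∈ ℕ with s ≥ 1, any matrix Ψ ∈ ℝ^{M×K} whose restricted isometry constant δ_{2s} satisfies δ_{2s} ≤ δ, any vector c̄ ∈ ℝ^K, any ε ≥ 0 and any noise vector e ∈ ℝ^M with ‖e‖₂ ≤ ε, if y = Ψc̄ + e and c is any minimizer of ‖c‖₁ over the set {c ∈ ℝ^K : ‖Ψc − y‖₂ ≤ ε}, then ‖c − c̄‖₂ ≤ C₁‖c̄ − c̄*‖₁/√s + C₂ε, where c̄* is the vector c̄ with all but its s largest-magnitude entries set to zero. -/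

import Mathlib

open Finset

/-- Squared Euclidean (ℓ₂) norm. -/
noncomputable def l2sq {n : Type*} [Fintype n] (x : n → ℝ) : ℝ := ∑ i, (x i) ^ 2

/-- Euclidean (ℓ₂) norm. -/
noncomputable def l2 {n : Type*} [Fintype n] (x : n → ℝ) : ℝ := Real.sqrt (∑ i, (x i) ^ 2)

/-- ℓ₁ norm. -/
noncomputable def l1 {n : Type*} [Fintype n] (x : n → ℝ) : ℝ := ∑ i, |x i|

/-- ℓ₀ "norm": number of nonzero entries. -/
noncomputable def l0 {n : Type*} [Fintype n] (x : n → ℝ) : ℕ := Set.ncard {i | x i ≠ 0}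

/-- `cstar` is `c` with all but its `s` largest-magnitude entries set to zero. -/
def IsBestSTerm {K : ℕ} (s : ℕ) (c cstar : Fin K → ℝ) : Prop :=
  ∃ S : Finset (Fin K), S.card = min s K ∧
    (∀ i, cstar i = if i ∈ S then c i else 0) ∧
    ∀ i ∈ S, ∀ j ∉ S, |c j| ≤ |c i|

set_option linter.unusedSectionVars false
set_option maxHeartbeats 1000000

variable {n : Type*} [Fintype n]

lemma l2sq_nonneg (x : n → ℝ) : 0 ≤ l2sq x := Finset.sum_nonneg fun _ _ => sq_nonneg _
lemma l2_nonneg (x : n → ℝ) : 0 ≤ l2 x := Real.sqrt_nonneg _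
lemma l2_eq (x : n → ℝ) : l2 x = Real.sqrt (l2sq x) := rfl
lemma l2sq_eq_sq (x : n → ℝ) : l2sq x = (l2 x) ^ 2 := (Real.sq_sqrt (l2sq_nonneg x)).symm
lemma l2_sq (x : n → ℝ) : (l2 x) ^ 2 = l2sq x := (l2sq_eq_sq x).symm

def dotR (x y : n → ℝ) : ℝ := ∑ i, x i * y i

lemma abs_dot_le (x y : n → ℝ) : |dotR x y| ≤ l2 x * l2 y := by
  have h1 : ∀ z : n → ℝ, dotR z y ≤ l2 x * l2 y → True := fun _ _ => trivial
  rw [abs_le]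
  constructor
  · have := Real.sum_mul_le_sqrt_mul_sqrt (Finset.univ (α := n)) (fun i => -(x i)) y
    simp only [neg_mul, Finset.sum_neg_distrib, neg_sq] at this
    rw [dotR, l2, l2]
    linarith [this]
  · have := Real.sum_mul_le_sqrt_mul_sqrt (Finset.univ (α := n)) x y
    rw [dotR, l2, l2]
    exact this

lemma l2_add_le (x y : n → ℝ) : l2 (x + y) ≤ l2 x + l2 y := by
  have key : l2sq (x + y) ≤ (l2 x + l2 y) ^ 2 := by
    have e : l2sq (x + y) = l2sq x + 2 * dotR x y + l2sq y := by
      simp only [l2sq, dotR, Pi.add_apply]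
      rw [Finset.mul_sum, ← Finset.sum_add_distrib, ← Finset.sum_add_distrib]
      apply Finset.sum_congr rfl; intro i _; ring
    have hd := (abs_le.mp (abs_dot_le x y)).2
    rw [e]
    have : (l2 x + l2 y)^2 = l2sq x + 2*(l2 x * l2 y) + l2sq y := by
      rw [add_sq, l2_sq, l2_sq]; ring
    linarith
  have := Real.sqrt_le_sqrt key
  rw [l2_eq]
  calc Real.sqrt (l2sq (x+y)) ≤ Real.sqrt ((l2 x + l2 y)^2) := this
    _ = l2 x + l2 y := Real.sqrt_sq (by have := l2_nonneg x; have := l2_nonneg y; linarith)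


section
variable {n : Type*} [Fintype n] [DecidableEq n]
set_option linter.unusedSectionVars false

lemma dotR_self (x : n → ℝ) : dotR x x = l2sq x := by
  simp [dotR, l2sq, sq]

lemma l2sq_add_expand (x y : n → ℝ) : l2sq (x + y) = l2sq x + 2 * dotR x y + l2sq y := by
  simp only [l2sq, dotR, Pi.add_apply]
  rw [Finset.mul_sum, ← Finset.sum_add_distrib, ← Finset.sum_add_distrib]
  apply Finset.sum_congr rfl; intro i _; ring

lemma l2sq_sub_expand (x y : n → ℝ) : l2sq (x - y) = l2sq x - 2 * dotR x y + l2sq y := by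
  simp only [l2sq, dotR, Pi.sub_apply]
  rw [Finset.mul_sum, ← Finset.sum_sub_distrib, ← Finset.sum_add_distrib]
  apply Finset.sum_congr rfl; intro i _; ring

lemma dotR_add_right (x y z : n → ℝ) : dotR x (y + z) = dotR x y + dotR x z := by
  simp only [dotR, Pi.add_apply, mul_add, Finset.sum_add_distrib]

lemma dotR_add_left (x y z : n → ℝ) : dotR (x + y) z = dotR x z + dotR y z := by
  simp only [dotR, Pi.add_apply, add_mul, Finset.sum_add_distrib]

lemma dotR_sum_right {ι : Type*} (J : Finset ι) (x : n → ℝ) (g : ι → n → ℝ) :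
    dotR x (∑ j ∈ J, g j) = ∑ j ∈ J, dotR x (g j) := by
  classical
  induction J using Finset.induction with
  | empty => simp [dotR]
  | insert _ _ hj ih =>
    rw [Finset.sum_insert hj, Finset.sum_insert hj, dotR_add_right, ih]

lemma dotR_smul_smul (a b : ℝ) (x y : n → ℝ) : dotR (b • x) (a • y) = (a * b) * dotR x y := by
  simp only [dotR, Pi.smul_apply, smul_eq_mul, Finset.mul_sum]
  apply Finset.sum_congr rfl; intro i _; ring

lemma l2_zero : l2 (0 : n → ℝ) = 0 := by simp [l2]

lemma eq_zero_of_l2_eq_zero {x : n → ℝ} (h : l2 x = 0) : x = 0 := by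
  have h2 : l2sq x = 0 := by rw [← l2_sq, h]; ring
  funext i
  have := (Finset.sum_eq_zero_iff_of_nonneg (fun i _ => sq_nonneg (x i))).mp h2 i (Finset.mem_univ i)
  exact pow_eq_zero_iff (by norm_num) |>.mp this

lemma l2sq_smul (b : ℝ) (x : n → ℝ) : l2sq (b • x) = b^2 * l2sq x := by
  simp only [l2sq, Pi.smul_apply, smul_eq_mul, mul_pow, Finset.mul_sum]

lemma l2_sum_le {ι : Type*} (J : Finset ι) (g : ι → n → ℝ)
    (htri : ∀ x y : n → ℝ, l2 (x + y) ≤ l2 x + l2 y) :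
    l2 (∑ j ∈ J, g j) ≤ ∑ j ∈ J, l2 (g j) := by
  classical
  induction J using Finset.induction with
  | empty => simp [l2_zero]
  | insert _ _ hj ih =>
    rename_i a J' _
    rw [Finset.sum_insert hj, Finset.sum_insert hj]
    exact (htri _ _).trans (by linarith)

lemma l2_neg (x : n → ℝ) : l2 (-x) = l2 x := by simp [l2]

lemma l0_support_le {x : n → ℝ} {S : Finset n} (h : ∀ i, i ∉ S → x i = 0) : l0 x ≤ S.card := by
  rw [l0]
  have hsub : {i | x i ≠ 0} ⊆ ↑S := by
    intro i hi
    by_contra hc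
    exact hi (h i (by simpa using hc))
  calc Set.ncard {i | x i ≠ 0} ≤ (↑S : Set n).ncard := Set.ncard_le_ncard hsub (S.finite_toSet)
    _ = S.card := Set.ncard_coe_finset S

lemma l2sq_add_of_disjoint_support {x y : n → ℝ} (h : ∀ i, x i = 0 ∨ y i = 0) :
    l2sq (x + y) = l2sq x + l2sq y := by
  rw [l2sq_add_expand]
  have : dotR x y = 0 := by
    rw [dotR]
    apply Finset.sum_eq_zero
    intro i _
    rcases h i with h0 | h0 <;> rw [h0] <;> ring
  rw [this]; ring

lemma l2sq_sub_of_disjoint_support {x y : n → ℝ} (h : ∀ i, x i = 0 ∨ y i = 0) :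
    l2sq (x - y) = l2sq x + l2sq y := by
  rw [l2sq_sub_expand]
  have : dotR x y = 0 := by
    rw [dotR]
    apply Finset.sum_eq_zero
    intro i _
    rcases h i with h0 | h0 <;> rw [h0] <;> ring
  rw [this]; ring

end

/-- one-sided restricted orthogonality -/
lemma rorth_one {M K : ℕ} {δ : ℝ} {s : ℕ} (Ψ : Matrix (Fin M) (Fin K) ℝ)
    (hRIP : ∀ c : Fin K → ℝ, l0 c ≤ 2 * s →
      (1 - δ) * l2sq c ≤ l2sq (Ψ.mulVec c) ∧ l2sq (Ψ.mulVec c) ≤ (1 + δ) * l2sq c)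
    (x y : Fin K → ℝ) (S S' : Finset (Fin K))
    (hx : ∀ i, i ∉ S → x i = 0) (hy : ∀ i, i ∉ S' → y i = 0)
    (hdisj : Disjoint S S') (hcard : S.card + S'.card ≤ 2 * s) :
    dotR (Ψ.mulVec x) (Ψ.mulVec y) ≤ δ * (l2 x * l2 y) := by
  set a := l2 x with ha
  set b := l2 y with hb
  have ha0 : 0 ≤ a := l2_nonneg x
  have hb0 : 0 ≤ b := l2_nonneg y
  rcases eq_or_lt_of_le ha0 with haz | hap
  · have : x = 0 := eq_zero_of_l2_eq_zero haz.symm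
    subst this
    simp only [dotR, Matrix.mulVec_zero, Pi.zero_apply, zero_mul, Finset.sum_const_zero]
    rw [← haz]; simp
  rcases eq_or_lt_of_le hb0 with hbz | hbp
  · have : y = 0 := eq_zero_of_l2_eq_zero hbz.symm
    subst this
    simp only [dotR, Matrix.mulVec_zero, Pi.zero_apply, mul_zero, Finset.sum_const_zero]
    rw [← hbz]; simp
  -- scaled vectors
  set u := b • x with hu
  set v := a • y with hv
  have hdxy : ∀ i, u i = 0 ∨ v i = 0 := by
    intro i
    by_cases hiS : i ∈ S
    · right
      have : i ∉ S' := Finset.disjoint_left.mp hdisj hiS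
      simp [hv, hy i this]
    · left; simp [hu, hx i hiS]
  have hsupp : ∀ i, i ∉ S ∪ S' → (u + v) i = 0 ∧ (u - v) i = 0 := by
    intro i hi
    rw [Finset.mem_union] at hi
    push_neg at hi
    simp [hu, hv, hx i hi.1, hy i hi.2]
  have hl0p : l0 (u + v) ≤ 2 * s :=
    le_trans (l0_support_le (fun i hi => (hsupp i hi).1))
      (le_trans (Finset.card_union_le S S') hcard)
  have hl0m : l0 (u - v) ≤ 2 * s :=
    le_trans (l0_support_le (fun i hi => (hsupp i hi).2))
      (le_trans (Finset.card_union_le S S') hcard)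
  have hup : l2sq u = b^2 * a^2 := by rw [hu, l2sq_smul, ← l2_sq]
  have hvp : l2sq v = a^2 * b^2 := by rw [hv, l2sq_smul, ← l2_sq]
  have hsum : l2sq (u + v) = 2 * (a^2 * b^2) := by
    rw [l2sq_add_of_disjoint_support hdxy, hup, hvp]; ring
  have hdiff : l2sq (u - v) = 2 * (a^2 * b^2) := by
    rw [l2sq_sub_of_disjoint_support hdxy, hup, hvp]; ring
  have h1 := (hRIP (u + v) hl0p).2
  have h2 := (hRIP (u - v) hl0m).1
  have hmuv : Ψ.mulVec (u + v) = Ψ.mulVec u + Ψ.mulVec v := Matrix.mulVec_add Ψ u v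
  have hmuv' : Ψ.mulVec (u - v) = Ψ.mulVec u - Ψ.mulVec v := by
    rw [sub_eq_add_neg, Matrix.mulVec_add, Matrix.mulVec_neg, ← sub_eq_add_neg]
  have hexp1 : l2sq (Ψ.mulVec (u + v))
      = l2sq (Ψ.mulVec u) + 2 * dotR (Ψ.mulVec u) (Ψ.mulVec v) + l2sq (Ψ.mulVec v) := by
    rw [hmuv, l2sq_add_expand]
  have hexp2 : l2sq (Ψ.mulVec (u - v))
      = l2sq (Ψ.mulVec u) - 2 * dotR (Ψ.mulVec u) (Ψ.mulVec v) + l2sq (Ψ.mulVec v) := by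
    rw [hmuv', l2sq_sub_expand]
  have kuv : dotR (Ψ.mulVec u) (Ψ.mulVec v) = (a * b) * dotR (Ψ.mulVec x) (Ψ.mulVec y) := by
    rw [hu, hv, Matrix.mulVec_smul, Matrix.mulVec_smul, dotR_smul_smul]
  have key : 4 * ((a*b) * dotR (Ψ.mulVec x) (Ψ.mulVec y)) ≤ 4 * δ * (a^2 * b^2) := by
    have e1 : l2sq (Ψ.mulVec (u + v)) ≤ (1 + δ) * (2 * (a^2*b^2)) := by rw [← hsum]; exact h1
    have e2 : (1 - δ) * (2 * (a^2*b^2)) ≤ l2sq (Ψ.mulVec (u - v)) := by rw [← hdiff]; exact h2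
    rw [hexp1] at e1
    rw [hexp2] at e2
    rw [← kuv]
    linarith
  have habp : 0 < a * b := mul_pos hap hbp
  nlinarith [key, habp]

lemma rorth {M K : ℕ} {δ : ℝ} {s : ℕ} (Ψ : Matrix (Fin M) (Fin K) ℝ)
    (hRIP : ∀ c : Fin K → ℝ, l0 c ≤ 2 * s →
      (1 - δ) * l2sq c ≤ l2sq (Ψ.mulVec c) ∧ l2sq (Ψ.mulVec c) ≤ (1 + δ) * l2sq c)
    (x y : Fin K → ℝ) (S S' : Finset (Fin K))
    (hx : ∀ i, i ∉ S → x i = 0) (hy : ∀ i, i ∉ S' → y i = 0)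
    (hdisj : Disjoint S S') (hcard : S.card + S'.card ≤ 2 * s) :
    |dotR (Ψ.mulVec x) (Ψ.mulVec y)| ≤ δ * (l2 x * l2 y) := by
  rw [abs_le]
  constructor
  · have := rorth_one Ψ hRIP (-x) y S S' (fun i hi => by simp [hx i hi]) hy hdisj hcard
    rw [Matrix.mulVec_neg] at this
    have hneg : dotR (-(Ψ.mulVec x)) (Ψ.mulVec y) = -dotR (Ψ.mulVec x) (Ψ.mulVec y) := by
      simp [dotR, Finset.sum_neg_distrib]
    rw [hneg, l2_neg] at this
    linarith
  · exact rorth_one Ψ hRIP x y S S' hx hy hdisj hcard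


section
variable {n : Type*} [Fintype n] [DecidableEq n]

/-- restriction of a vector to a finset -/
def rst (S : Finset n) (x : n → ℝ) : n → ℝ := fun i => if i ∈ S then x i else 0

lemma l2sq_rst (S : Finset n) (x : n → ℝ) : l2sq (rst S x) = ∑ i ∈ S, (x i)^2 := by
  rw [l2sq, ← Finset.sum_subset (Finset.subset_univ S)]
  · exact Finset.sum_congr rfl fun i hi => by simp [rst, hi]
  · intro i _ hi; simp [rst, hi]

lemma l1_rst (S : Finset n) (x : n → ℝ) : l1 (rst S x) = ∑ i ∈ S, |x i| := by
  rw [l1, ← Finset.sum_subset (Finset.subset_univ S)]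
  · exact Finset.sum_congr rfl fun i hi => by simp [rst, hi]
  · intro i _ hi; simp [rst, hi]

lemma l0_rst_le (S : Finset n) (x : n → ℝ) : l0 (rst S x) ≤ S.card := by
  rw [l0]
  have hsub : {i | rst S x i ≠ 0} ⊆ ↑S := by
    intro i hi
    simp only [Set.mem_setOf_eq, rst] at hi
    by_contra hc
    rw [Finset.mem_coe] at hc
    simp [hc] at hi
  calc Set.ncard {i | rst S x i ≠ 0} ≤ (↑S : Set n).ncard :=
        Set.ncard_le_ncard hsub (S.finite_toSet)
    _ = S.card := Set.ncard_coe_finset S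

lemma rst_union_of_disjoint {S T : Finset n} (h : Disjoint S T) (x : n → ℝ) :
    rst (S ∪ T) x = rst S x + rst T x := by
  funext i
  simp only [rst, Pi.add_apply, Finset.mem_union]
  by_cases hS : i ∈ S
  · have : i ∉ T := fun hT => (Finset.disjoint_left.mp h hS) hT
    simp [hS, this]
  · by_cases hT : i ∈ T <;> simp [hS, hT]

lemma l2_rst_mono {S T : Finset n} (h : S ⊆ T) (x : n → ℝ) : l2 (rst S x) ≤ l2 (rst T x) := by
  apply Real.sqrt_le_sqrt
  rw [show (∑ i, (rst S x i)^2) = l2sq (rst S x) from rfl,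
      show (∑ i, (rst T x i)^2) = l2sq (rst T x) from rfl, l2sq_rst, l2sq_rst]
  exact Finset.sum_le_sum_of_subset_of_nonneg h (fun i _ _ => sq_nonneg _)


/-- selection of the (at most) `t` largest-magnitude entries of `f` within `A` -/
lemma exists_top_subset (f : n → ℝ) :
    ∀ (t : ℕ) (A : Finset n), ∃ S, S ⊆ A ∧ S.card = min t A.card ∧
      ∀ i ∈ S, ∀ j ∈ A \ S, |f j| ≤ |f i| := by
  intro t
  induction t with
  | zero => intro A; exact ⟨∅, Finset.empty_subset _, by simp, by simp⟩
  | succ t ih =>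
    intro A
    rcases A.eq_empty_or_nonempty with rfl | hA
    · exact ⟨∅, by simp, by simp, by simp⟩
    · obtain ⟨m, hm, hmax⟩ := A.exists_max_image (fun i => |f i|) hA
      obtain ⟨S, hS, hcard, hord⟩ := ih (A.erase m)
      have hmS : m ∉ S := fun h => (Finset.mem_erase.mp (hS h)).1 rfl
      refine ⟨insert m S, ?_, ?_, ?_⟩
      · intro i hi
        rcases Finset.mem_insert.mp hi with rfl | hi
        · exact hm
        · exact Finset.mem_of_mem_erase (hS hi)
      · rw [Finset.card_insert_of_notMem hmS, hcard, Finset.card_erase_of_mem hm]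
        have : 1 ≤ A.card := Finset.card_pos.mpr hA
        omega
      · intro i hi j hj
        have hjA : j ∈ A := (Finset.mem_sdiff.mp hj).1
        have hjni : j ∉ insert m S := (Finset.mem_sdiff.mp hj).2
        have hjm : j ≠ m := fun h => hjni (h ▸ Finset.mem_insert_self m S)
        have hjS : j ∉ S := fun h => hjni (Finset.mem_insert_of_mem h)
        rcases Finset.mem_insert.mp hi with rfl | hi
        · exact hmax j hjA
        · exact hord i hi j (Finset.mem_sdiff.mpr ⟨Finset.mem_erase.mpr ⟨hjm, hjA⟩, hjS⟩)

/-- blocks and remainders for the Candès block decomposition -/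
noncomputable def blockAux (f : n → ℝ) (s : ℕ) (T0 : Finset n) : ℕ → Finset n × Finset n
  | 0 => (T0, T0ᶜ)
  | (j+1) =>
      ((exists_top_subset f s (blockAux f s T0 j).2).choose,
        (blockAux f s T0 j).2 \ (exists_top_subset f s (blockAux f s T0 j).2).choose)

variable (f : n → ℝ) (s : ℕ) (T0 : Finset n)

noncomputable def blkT (j : ℕ) : Finset n := (blockAux f s T0 j).1
noncomputable def blkR (j : ℕ) : Finset n := (blockAux f s T0 j).2

lemma blkT_zero : blkT f s T0 0 = T0 := rfl
lemma blkR_zero : blkR f s T0 0 = T0ᶜ := rfl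

lemma blk_spec (j : ℕ) :
    blkT f s T0 (j+1) ⊆ blkR f s T0 j ∧
    (blkT f s T0 (j+1)).card = min s (blkR f s T0 j).card ∧
    (∀ i ∈ blkT f s T0 (j+1), ∀ k ∈ blkR f s T0 j \ blkT f s T0 (j+1), |f k| ≤ |f i|) :=
  (exists_top_subset f s (blockAux f s T0 j).2).choose_spec

lemma blkR_succ (j : ℕ) : blkR f s T0 (j+1) = blkR f s T0 j \ blkT f s T0 (j+1) := rfl

lemma blkR_succ_subset (j : ℕ) : blkR f s T0 (j+1) ⊆ blkR f s T0 j := by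
  rw [blkR_succ]; exact Finset.sdiff_subset

lemma blkR_mono : ∀ {a b : ℕ}, a ≤ b → blkR f s T0 b ⊆ blkR f s T0 a := by
  intro a b hab
  induction b with
  | zero => have : a = 0 := Nat.le_zero.mp hab; subst this; exact Finset.Subset.refl _
  | succ b ih =>
    rcases Nat.lt_or_ge a (b+1) with h | h
    · exact (blkR_succ_subset f s T0 b).trans (ih (Nat.lt_succ_iff.mp h))
    · have : a = b + 1 := le_antisymm hab h
      subst this; exact Finset.Subset.refl _

lemma blkT_disj_blkR (j : ℕ) : Disjoint (blkT f s T0 j) (blkR f s T0 j) := by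
  cases j with
  | zero => rw [blkT_zero, blkR_zero]; exact disjoint_compl_right
  | succ j => rw [blkR_succ]; exact Finset.disjoint_sdiff

lemma blkT_disjoint {a b : ℕ} (hab : a < b) :
    Disjoint (blkT f s T0 a) (blkT f s T0 b) := by
  obtain ⟨b', rfl⟩ : ∃ b', b = b' + 1 := ⟨b - 1, by omega⟩
  have h1 : blkT f s T0 (b'+1) ⊆ blkR f s T0 b' := (blk_spec f s T0 b').1
  have h2 : blkR f s T0 b' ⊆ blkR f s T0 a := blkR_mono f s T0 (by omega)
  exact Finset.disjoint_of_subset_right (h1.trans h2) (blkT_disj_blkR f s T0 a)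

lemma blk_union (j : ℕ) :
    (Finset.range (j+1)).biUnion (blkT f s T0) = (blkR f s T0 j)ᶜ := by
  induction j with
  | zero => simp [blkT_zero, blkR_zero]
  | succ j ih =>
    rw [Finset.range_add_one, Finset.biUnion_insert, ih, blkR_succ]
    have h1 : blkT f s T0 (j+1) ⊆ blkR f s T0 j := (blk_spec f s T0 j).1
    rw [Finset.sdiff_eq_inter_compl, Finset.compl_inter, compl_compl]
    rw [Finset.union_comm]

lemma blkR_card (hs : 1 ≤ s) : ∀ j : ℕ, (blkR f s T0 j).card + j ≤ Fintype.card n ∨ blkR f s T0 j = ∅ := by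
  intro j
  induction j with
  | zero => left; simpa using Finset.card_le_univ (blkR f s T0 0)
  | succ j ih =>
    rcases ih with h | h
    · rcases (blkR f s T0 j).eq_empty_or_nonempty with he | hne
      · right; rw [blkR_succ, he]; simp
      · left
        have hc : 1 ≤ (blkR f s T0 j).card := Finset.card_pos.mpr hne
        have hcard : (blkT f s T0 (j+1)).card = min s (blkR f s T0 j).card := (blk_spec f s T0 j).2.1
        have h1 : 1 ≤ (blkT f s T0 (j+1)).card := by omega
        have h2 : (blkR f s T0 (j+1)).card = (blkR f s T0 j).card - (blkT f s T0 (j+1)).card := by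
          rw [blkR_succ]
          exact Finset.card_sdiff_of_subset ((blk_spec f s T0 j).1)
        omega
    · right; rw [blkR_succ, h]; simp

lemma blkR_eventually_empty (hs : 1 ≤ s) : blkR f s T0 (Fintype.card n) = ∅ := by
  rcases blkR_card f s T0 hs (Fintype.card n) with h | h
  · exact Finset.card_eq_zero.mp (by omega)
  · exact h

/-- if a block is not full, the next remainder is empty -/
lemma blkR_empty_of_small (j : ℕ) (h : (blkT f s T0 (j+1)).card < s) :
    blkR f s T0 (j+1) = ∅ := by
  have hcard : (blkT f s T0 (j+1)).card = min s (blkR f s T0 j).card := (blk_spec f s T0 j).2.1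
  have : (blkT f s T0 (j+1)).card = (blkR f s T0 j).card := by omega
  have heq : blkT f s T0 (j+1) = blkR f s T0 j :=
    Finset.eq_of_subset_of_card_le (blk_spec f s T0 j).1 (by omega)
  rw [blkR_succ, heq]; simp

lemma blk_dom (j : ℕ) :
    ∀ i ∈ blkT f s T0 (j+1), ∀ k ∈ blkR f s T0 (j+1), |f k| ≤ |f i| := by
  intro i hi k hk
  rw [blkR_succ] at hk
  exact (blk_spec f s T0 j).2.2 i hi k hk


lemma sum_rst_blocks (f : n → ℝ) (s : ℕ) (T0 : Finset n) (hs : 1 ≤ s) (x : n → ℝ)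
    (m : ℕ) (hm : Fintype.card n + 1 ≤ m) :
    ∑ j ∈ Finset.range m, rst (blkT f s T0 j) x = x := by
  funext i
  rw [Finset.sum_apply]
  have hiu : i ∈ (blkR f s T0 (Fintype.card n))ᶜ := by
    rw [blkR_eventually_empty f s T0 hs]; simp
  rw [← blk_union] at hiu
  obtain ⟨j0, hj0r, hij0⟩ := Finset.mem_biUnion.mp hiu
  have hj0m : j0 ∈ Finset.range m := by
    rw [Finset.mem_range] at hj0r ⊢; omega
  rw [Finset.sum_eq_single_of_mem j0 hj0m]
  · simp [rst, hij0]
  · intro j hj hne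
    have hni : i ∉ blkT f s T0 j := by
      rcases Nat.lt_or_ge j0 j with hlt | hge
      · exact Finset.disjoint_left.mp (blkT_disjoint f s T0 hlt) hij0
      · have hlt : j < j0 := by omega
        intro hc
        exact (Finset.disjoint_left.mp (blkT_disjoint f s T0 hlt) hc) hij0
    simp [rst, hni]

lemma blk_tail_bound (f : n → ℝ) (s : ℕ) (T0 : Finset n) (hs : 1 ≤ s) (j : ℕ) :
    l2 (rst (blkT f s T0 (j+2)) f) ≤ (∑ i ∈ blkT f s T0 (j+1), |f i|) / Real.sqrt s := by
  set T2 := blkT f s T0 (j+2) with hT2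
  set T1 := blkT f s T0 (j+1) with hT1
  set L := ∑ i ∈ T1, |f i| with hL
  have hL0 : 0 ≤ L := Finset.sum_nonneg fun i _ => abs_nonneg _
  have hsr : (0:ℝ) < Real.sqrt s := Real.sqrt_pos.mpr (by exact_mod_cast hs)
  have hcard1 : T1.card = min s (blkR f s T0 j).card := (blk_spec f s T0 j).2.1
  rcases Nat.lt_or_ge T1.card s with hsm | hge
  · -- T1 not full, so T2 empty
    have hRe : blkR f s T0 (j+1) = ∅ := blkR_empty_of_small f s T0 j hsm
    have hT2e : T2 = ∅ := Finset.subset_empty.mp (hRe ▸ (blk_spec f s T0 (j+1)).1)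
    have hz : rst T2 f = 0 := by funext i; simp [rst, hT2e]
    rw [hz, l2_zero]
    positivity
  · have hcs : T1.card = s := le_antisymm (hcard1 ▸ Nat.min_le_left _ _) hge
    have hspos : (0:ℝ) < (s:ℝ) := by exact_mod_cast hs
    have helt : ∀ k ∈ T2, |f k| ≤ L / s := by
      intro k hk
      have hkR : k ∈ blkR f s T0 (j+1) := (blk_spec f s T0 (j+1)).1 hk
      have hle : ∀ i ∈ T1, |f k| ≤ |f i| := fun i hi => blk_dom f s T0 j i hi k hkR
      have hsum : (T1.card : ℝ) * |f k| ≤ L := by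
        rw [hL]
        calc (T1.card : ℝ) * |f k| = ∑ _i ∈ T1, |f k| := by
              rw [Finset.sum_const, nsmul_eq_mul]
          _ ≤ ∑ i ∈ T1, |f i| := Finset.sum_le_sum hle
      rw [hcs] at hsum
      rw [le_div_iff₀ hspos]
      linarith
    have hc2 : (T2.card : ℝ) ≤ (s : ℝ) := by
      have : T2.card = min s (blkR f s T0 (j+1)).card := (blk_spec f s T0 (j+1)).2.1
      exact_mod_cast this ▸ Nat.min_le_left _ _
    have hsq : l2sq (rst T2 f) ≤ L^2 / s := by
      rw [l2sq_rst]
      calc ∑ k ∈ T2, f k ^ 2 ≤ ∑ _k ∈ T2, (L/s)^2 := by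
            apply Finset.sum_le_sum
            intro k hk
            rw [← sq_abs]
            exact pow_le_pow_left₀ (abs_nonneg _) (helt k hk) 2
        _ = (T2.card : ℝ) * (L/s)^2 := by rw [Finset.sum_const, nsmul_eq_mul]
        _ ≤ (s:ℝ) * (L/s)^2 := mul_le_mul_of_nonneg_right hc2 (sq_nonneg _)
        _ = L^2 / s := by field_simp
    calc l2 (rst T2 f) = Real.sqrt (l2sq (rst T2 f)) := l2_eq _
      _ ≤ Real.sqrt (L^2 / s) := Real.sqrt_le_sqrt hsq
      _ = L / Real.sqrt s := by
          rw [Real.sqrt_div (sq_nonneg L), Real.sqrt_sq hL0]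

end

theorem rip_basis_pursuit_denoising_error
    (δ : ℝ) (hδ0 : 0 < δ) (hδ1 : δ < Real.sqrt 2 - 1) :
    ∃ C₁ C₂ : ℝ, 0 < C₁ ∧ 0 < C₂ ∧
      ∀ (M K s : ℕ), 1 ≤ s →
      ∀ (Ψ : Matrix (Fin M) (Fin K) ℝ),
        -- the restricted isometry constant `δ_{2s}` of `Ψ` satisfies `δ_{2s} ≤ δ`,
        -- i.e. the RIP inequality of order `2s` holds with constant `δ`:
        (∀ c : Fin K → ℝ, l0 c ≤ 2 * s →
          (1 - δ) * l2sq c ≤ l2sq (Ψ.mulVec c) ∧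
            l2sq (Ψ.mulVec c) ≤ (1 + δ) * l2sq c) →
      ∀ (cbar : Fin K → ℝ) (ε : ℝ), 0 ≤ ε →
      ∀ (e : Fin M → ℝ), l2 e ≤ ε →
      ∀ (c : Fin K → ℝ),
        -- `c` is feasible for the noisy measurements `y = Ψ c̄ + e` ...
        l2 (Ψ.mulVec c - (Ψ.mulVec cbar + e)) ≤ ε →
        -- ... and is a minimizer of the ℓ₁ norm over the feasible set:
        (∀ c' : Fin K → ℝ, l2 (Ψ.mulVec c' - (Ψ.mulVec cbar + e)) ≤ ε → l1 c ≤ l1 c') →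
      ∀ cstar : Fin K → ℝ, IsBestSTerm s cbar cstar →
        l2 (c - cbar) ≤ C₁ * l1 (cbar - cstar) / Real.sqrt s + C₂ * ε := by
  have hs2 : Real.sqrt 2 ^ 2 = 2 := Real.sq_sqrt (by norm_num)
  have hs2p : (0:ℝ) < Real.sqrt 2 := Real.sqrt_pos.mpr (by norm_num)
  set d := 1 - δ - Real.sqrt 2 * δ with hd_def
  have hd : 0 < d := by nlinarith [mul_lt_mul_of_pos_left hδ1 hs2p]
  have hδlt1 : δ < 1 := by nlinarith
  refine ⟨4 * Real.sqrt 2 * δ / d + 2, 4 * Real.sqrt (1 + δ) / d, ?_, ?_, ?_⟩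
  · have : 0 ≤ 4 * Real.sqrt 2 * δ / d := div_nonneg (by positivity) hd.le
    linarith
  · exact div_pos (by positivity) hd
  intro M K s hs Ψ hRIP cbar ε hε e he c hfeas hmin cstar hbest
  obtain ⟨T0, hT0card, hcstar, hT0max⟩ := hbest
  set h := c - cbar with hh
  set T : ℕ → Finset (Fin K) := blkT h s T0 with hTdef
  have hT0 : T 0 = T0 := rfl
  have hcardK : Fintype.card (Fin K) = K := Fintype.card_fin K
  have hsr : (0:ℝ) < Real.sqrt s := Real.sqrt_pos.mpr (by exact_mod_cast hs)
  set e0 := l1 (cbar - cstar) with he0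
  -- e0 equals the ℓ¹ mass of cbar off T0
  have he0eq : e0 = ∑ i ∈ T0ᶜ, |cbar i| := by
    rw [he0, l1]
    have hterm : ∀ i, |(cbar - cstar) i| = if i ∈ T0ᶜ then |cbar i| else 0 := by
      intro i
      rw [Pi.sub_apply, hcstar i]
      by_cases hi : i ∈ T0 <;> simp [hi]
    calc ∑ i, |(cbar - cstar) i| = ∑ i, if i ∈ T0ᶜ then |cbar i| else 0 :=
          Finset.sum_congr rfl fun i _ => hterm i
      _ = ∑ i ∈ Finset.univ ∩ T0ᶜ, |cbar i| := Finset.sum_ite_mem _ _ _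
      _ = ∑ i ∈ T0ᶜ, |cbar i| := by rw [Finset.univ_inter]
  have he0nn : 0 ≤ e0 := by
    rw [he0eq]; exact Finset.sum_nonneg fun i _ => abs_nonneg _
  -- minimality against cbar
  have hfeascbar : l2 (Ψ.mulVec cbar - (Ψ.mulVec cbar + e)) ≤ ε := by
    have hid : Ψ.mulVec cbar - (Ψ.mulVec cbar + e) = -e := by abel
    rw [hid, l2_neg]; exact he
  have hl1 : l1 c ≤ l1 cbar := hmin cbar hfeascbar
  -- cone constraint
  have hcone : ∑ i ∈ T0ᶜ, |h i| ≤ ∑ i ∈ T0, |h i| + 2 * e0 := by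
    have hsplitc : ∑ i ∈ T0, |c i| + ∑ i ∈ T0ᶜ, |c i| = l1 c :=
      Finset.sum_add_sum_compl T0 _
    have hsplitcb : ∑ i ∈ T0, |cbar i| + ∑ i ∈ T0ᶜ, |cbar i| = l1 cbar :=
      Finset.sum_add_sum_compl T0 _
    have hA1 : ∑ i ∈ T0, |cbar i| - ∑ i ∈ T0, |h i| ≤ ∑ i ∈ T0, |c i| := by
      rw [← Finset.sum_sub_distrib]
      apply Finset.sum_le_sum
      intro i _
      have h1 := abs_sub_abs_le_abs_sub (cbar i) (c i)
      have h2 : |cbar i - c i| = |h i| := by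
        rw [hh, Pi.sub_apply, abs_sub_comm]
      linarith
    have hA2 : ∑ i ∈ T0ᶜ, |h i| - ∑ i ∈ T0ᶜ, |cbar i| ≤ ∑ i ∈ T0ᶜ, |c i| := by
      rw [← Finset.sum_sub_distrib]
      apply Finset.sum_le_sum
      intro i _
      have h1 := abs_sub (c i) (cbar i)
      have h2 : |c i - cbar i| = |h i| := by rw [hh, Pi.sub_apply]
      linarith
    rw [he0eq]
    linarith
  -- tube constraint
  have htube : l2 (Ψ.mulVec h) ≤ 2 * ε := by
    have hid : Ψ.mulVec h = (Ψ.mulVec c - (Ψ.mulVec cbar + e)) + e := by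
      rw [hh, Matrix.mulVec_sub]; abel
    rw [hid]
    have := l2_add_le (Ψ.mulVec c - (Ψ.mulVec cbar + e)) e
    linarith
  -- blocks data
  have hTdisj : ∀ {a b : ℕ}, a < b → Disjoint (T a) (T b) := by
    intro a b hab
    have h0 := blkT_disjoint h s T0 hab
    rwa [← hTdef] at h0
  have hT01disj : Disjoint T0 (T 1) := by
    have h0 := hTdisj (show 0 < 1 by norm_num)
    rwa [hT0] at h0
  set S01 := T0 ∪ T 1 with hS01
  set A := l2 (rst S01 h) with hA
  set a0 := l2 (rst T0 h) with ha0
  set a1 := l2 (rst (T 1) h) with ha1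
  have hAnn : 0 ≤ A := l2_nonneg _
  have ha0le : a0 ≤ A := l2_rst_mono Finset.subset_union_left h
  have ha1le : a1 ≤ A := l2_rst_mono Finset.subset_union_right h
  have hcT0 : T0.card ≤ s := by
    rw [hT0card]; exact Nat.min_le_left _ _
  have hcT : ∀ j : ℕ, (T (j+1)).card ≤ s := by
    intro j
    rw [hTdef, (blk_spec h s T0 j).2.1]
    exact Nat.min_le_left _ _
  have hcS01 : S01.card ≤ 2 * s := by
    have h1 : S01.card ≤ T0.card + (T 1).card := Finset.card_union_le T0 (T 1)
    have h2 : (T 1).card ≤ s := hcT 0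
    omega
  -- partition of h
  have hRK : blkR h s T0 K = ∅ := by
    have := blkR_eventually_empty h s T0 hs
    rwa [hcardK] at this
  have hpart : ∑ j ∈ Finset.range (K+2), rst (T j) h = h :=
    sum_rst_blocks h s T0 hs h (K+2) (by omega)
  have hsplit : h = rst S01 h + ∑ j ∈ Finset.range K, rst (T (j+2)) h := by
    have e1 : ∑ j ∈ Finset.range (K+2), rst (T j) h
        = (∑ j ∈ Finset.range (K+1), rst (T (j+1)) h) + rst (T 0) h :=
      Finset.sum_range_succ' _ _
    have e2 : ∑ j ∈ Finset.range (K+1), rst (T (j+1)) h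
        = (∑ j ∈ Finset.range K, rst (T (j+2)) h) + rst (T 1) h :=
      Finset.sum_range_succ' _ _
    have e3 : rst S01 h = rst T0 h + rst (T 1) h := rst_union_of_disjoint hT01disj h
    conv_lhs => rw [← hpart]
    rw [e1, e2, e3, hT0]
    abel
  -- tail sum
  set Sig2 := ∑ j ∈ Finset.range K, l2 (rst (T (j+2)) h) with hSig2
  have hSig2nn : 0 ≤ Sig2 := Finset.sum_nonneg fun j _ => l2_nonneg _
  set E := e0 / Real.sqrt s with hE
  have hEnn : 0 ≤ E := div_nonneg he0nn hsr.le
  -- Sig2 ≤ ℓ¹(h off T0)/√s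
  have hBeq : (Finset.range K).biUnion (fun j => T (j+1)) = T0ᶜ := by
    apply Finset.Subset.antisymm
    · intro i hi
      obtain ⟨j, hjr, hij⟩ := Finset.mem_biUnion.mp hi
      have hsub : T (j+1) ⊆ T0ᶜ := by
        refine Finset.Subset.trans (blk_spec h s T0 j).1 ?_
        have := blkR_mono h s T0 (Nat.zero_le j)
        rwa [blkR_zero] at this
      exact hsub hij
    · intro i hi
      have huniv : (Finset.range (K+1)).biUnion T = Finset.univ := by
        rw [hTdef, blk_union, hRK]
        simp
      have : i ∈ (Finset.range (K+1)).biUnion T := huniv ▸ Finset.mem_univ i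
      obtain ⟨j, hjr, hij⟩ := Finset.mem_biUnion.mp this
      have hj0 : j ≠ 0 := by
        intro hz
        rw [hz, hT0] at hij
        exact (Finset.mem_compl.mp hi) hij
      refine Finset.mem_biUnion.mpr ⟨j-1, ?_, ?_⟩
      · rw [Finset.mem_range] at hjr ⊢; omega
      · have : j - 1 + 1 = j := by omega
        rw [this]; exact hij
  have hpwdisj : (↑(Finset.range K) : Set ℕ).PairwiseDisjoint (fun j => T (j+1)) := by
    intro a _ b _ hab
    rcases Nat.lt_or_ge a b with hlt | hge
    · exact hTdisj (by omega)
    · exact (hTdisj (by omega : (b:ℕ)+1 < a+1)).symm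
  have hSig2b : Sig2 ≤ (∑ i ∈ T0ᶜ, |h i|) / Real.sqrt s := by
    calc Sig2 ≤ ∑ j ∈ Finset.range K, (∑ i ∈ T (j+1), |h i|) / Real.sqrt s :=
          Finset.sum_le_sum fun j _ => blk_tail_bound h s T0 hs j
      _ = (∑ j ∈ Finset.range K, ∑ i ∈ T (j+1), |h i|) / Real.sqrt s := by
          rw [Finset.sum_div]
      _ = (∑ i ∈ T0ᶜ, |h i|) / Real.sqrt s := by
          rw [← hBeq, Finset.sum_biUnion hpwdisj]
  -- ℓ¹(h on T0) ≤ √s * a0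
  have hl1T0 : ∑ i ∈ T0, |h i| ≤ Real.sqrt s * a0 := by
    have hcs := Real.sum_mul_le_sqrt_mul_sqrt T0 (fun _ => (1:ℝ)) (fun i => |h i|)
    simp only [one_mul, one_pow] at hcs
    have h1 : Real.sqrt (∑ _i ∈ T0, (1:ℝ)) = Real.sqrt (T0.card) := by
      rw [Finset.sum_const, nsmul_eq_mul, mul_one]
    have h2 : Real.sqrt (∑ i ∈ T0, |h i| ^ 2) = a0 := by
      rw [ha0, l2_eq, l2sq_rst]
      congr 1
      exact Finset.sum_congr rfl fun i _ => by rw [sq_abs]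
    rw [h1, h2] at hcs
    have h3 : Real.sqrt (T0.card) ≤ Real.sqrt s :=
      Real.sqrt_le_sqrt (by exact_mod_cast hcT0)
    have h4 : 0 ≤ a0 := l2_nonneg _
    nlinarith [Real.sqrt_nonneg (T0.card : ℝ)]
  have hSig2A : Sig2 ≤ A + 2 * E := by
    have h5 : ∑ i ∈ T0ᶜ, |h i| ≤ Real.sqrt s * a0 + 2 * e0 := by linarith
    have h6 : Sig2 ≤ (Real.sqrt s * a0 + 2 * e0) / Real.sqrt s := by
      apply hSig2b.trans
      gcongr
    have h7 : (Real.sqrt s * a0 + 2 * e0) / Real.sqrt s = a0 + 2 * E := by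
      rw [hE]; field_simp
    rw [h7] at h6
    linarith
  -- RIP on the main part
  have hl0S01 : l0 (rst S01 h) ≤ 2 * s := le_trans (l0_rst_le S01 h) hcS01
  have hripS01 := hRIP (rst S01 h) hl0S01
  have hA2 : l2sq (rst S01 h) = A ^ 2 := (l2_sq _).symm
  have hPsiA : l2 (Ψ.mulVec (rst S01 h)) ≤ Real.sqrt (1 + δ) * A := by
    have h1 : l2sq (Ψ.mulVec (rst S01 h)) ≤ (1 + δ) * A ^ 2 := by
      rw [← hA2]; exact hripS01.2
    calc l2 (Ψ.mulVec (rst S01 h)) = Real.sqrt (l2sq (Ψ.mulVec (rst S01 h))) := l2_eq _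
      _ ≤ Real.sqrt ((1 + δ) * A ^ 2) := Real.sqrt_le_sqrt h1
      _ = Real.sqrt (1 + δ) * A := by
          rw [Real.sqrt_mul (by linarith) (A ^ 2), Real.sqrt_sq hAnn]
  -- decomposition of Ψh
  have hTparts : Ψ.mulVec h
      = Ψ.mulVec (rst S01 h) + ∑ j ∈ Finset.range K, Ψ.mulVec (rst (T (j+2)) h) := by
    conv_lhs => rw [hsplit]
    rw [Matrix.mulVec_add]
    congr 1
    rw [show Ψ.mulVec (∑ j ∈ Finset.range K, rst (T (j+2)) h)
        = Ψ.mulVecLin (∑ j ∈ Finset.range K, rst (T (j+2)) h) from rfl, map_sum]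
    rfl
  have hdot : l2sq (Ψ.mulVec (rst S01 h))
      = dotR (Ψ.mulVec (rst S01 h)) (Ψ.mulVec h)
        - ∑ j ∈ Finset.range K, dotR (Ψ.mulVec (rst S01 h)) (Ψ.mulVec (rst (T (j+2)) h)) := by
    rw [hTparts, dotR_add_right, dotR_sum_right, dotR_self]
    ring
  -- bound on the main inner product
  have hd1 : dotR (Ψ.mulVec (rst S01 h)) (Ψ.mulVec h)
      ≤ Real.sqrt (1 + δ) * A * (2 * ε) := by
    have := abs_dot_le (Ψ.mulVec (rst S01 h)) (Ψ.mulVec h)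
    have h1 := (abs_le.mp this).2
    have h2 : l2 (Ψ.mulVec (rst S01 h)) * l2 (Ψ.mulVec h)
        ≤ (Real.sqrt (1 + δ) * A) * (2 * ε) :=
      mul_le_mul hPsiA htube (l2_nonneg _) (by positivity)
    linarith
  -- a0 + a1 ≤ √2 A
  have ha01 : a0 + a1 ≤ Real.sqrt 2 * A := by
    have hsqsum : a0 ^ 2 + a1 ^ 2 = A ^ 2 := by
      rw [ha0, ha1, hA, l2_sq, l2_sq, l2_sq, l2sq_rst, l2sq_rst, l2sq_rst, hS01,
        Finset.sum_union hT01disj]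
    have h40 : 0 ≤ a0 := l2_nonneg _
    have h41 : 0 ≤ a1 := l2_nonneg _
    have hsq : (a0 + a1) ^ 2 ≤ (Real.sqrt 2 * A) ^ 2 := by
      rw [mul_pow, hs2]
      nlinarith [sq_nonneg (a0 - a1)]
    have hmono := Real.sqrt_le_sqrt hsq
    rw [Real.sqrt_sq (by positivity), Real.sqrt_sq (by positivity)] at hmono
    exact hmono
  -- bounds on cross inner products
  have hd2 : ∀ j ∈ Finset.range K,
      |dotR (Ψ.mulVec (rst S01 h)) (Ψ.mulVec (rst (T (j+2)) h))|
        ≤ Real.sqrt 2 * δ * A * l2 (rst (T (j+2)) h) := by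
    intro j _
    have hsplitS : Ψ.mulVec (rst S01 h) = Ψ.mulVec (rst T0 h) + Ψ.mulVec (rst (T 1) h) := by
      rw [hS01, rst_union_of_disjoint hT01disj, Matrix.mulVec_add]
    have hdisj0 : Disjoint T0 (T (j+2)) := by
      have h0 := hTdisj (show 0 < j + 2 by omega)
      rwa [hT0] at h0
    have hdisj1 : Disjoint (T 1) (T (j+2)) := hTdisj (by omega)
    have hr0 := rorth Ψ hRIP (rst T0 h) (rst (T (j+2)) h) T0 (T (j+2))
      (fun i hi => by simp [rst, hi]) (fun i hi => by simp [rst, hi]) hdisj0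
      (by have h1 : (T (j+2)).card ≤ s := hcT (j+1); omega)
    have hr1 := rorth Ψ hRIP (rst (T 1) h) (rst (T (j+2)) h) (T 1) (T (j+2))
      (fun i hi => by simp [rst, hi]) (fun i hi => by simp [rst, hi]) hdisj1
      (by have h1 : (T 1).card ≤ s := hcT 0
          have h2 : (T (j+2)).card ≤ s := hcT (j+1); omega)
    have habs : |dotR (Ψ.mulVec (rst S01 h)) (Ψ.mulVec (rst (T (j+2)) h))|
        ≤ |dotR (Ψ.mulVec (rst T0 h)) (Ψ.mulVec (rst (T (j+2)) h))|
          + |dotR (Ψ.mulVec (rst (T 1) h)) (Ψ.mulVec (rst (T (j+2)) h))| := by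
      rw [hsplitS, dotR_add_left]
      exact abs_add_le _ _
    have htnn : 0 ≤ l2 (rst (T (j+2)) h) := l2_nonneg _
    have : δ * (a0 * l2 (rst (T (j+2)) h)) + δ * (a1 * l2 (rst (T (j+2)) h))
        ≤ Real.sqrt 2 * δ * A * l2 (rst (T (j+2)) h) := by
      have : δ * ((a0 + a1) * l2 (rst (T (j+2)) h))
          ≤ δ * ((Real.sqrt 2 * A) * l2 (rst (T (j+2)) h)) := by
        apply mul_le_mul_of_nonneg_left ?_ hδ0.le
        exact mul_le_mul_of_nonneg_right ha01 htnn
      nlinarith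
    calc |dotR (Ψ.mulVec (rst S01 h)) (Ψ.mulVec (rst (T (j+2)) h))|
        ≤ |dotR (Ψ.mulVec (rst T0 h)) (Ψ.mulVec (rst (T (j+2)) h))|
          + |dotR (Ψ.mulVec (rst (T 1) h)) (Ψ.mulVec (rst (T (j+2)) h))| := habs
      _ ≤ δ * (a0 * l2 (rst (T (j+2)) h)) + δ * (a1 * l2 (rst (T (j+2)) h)) := by
          rw [ha0, ha1]; exact add_le_add hr0 hr1
      _ ≤ Real.sqrt 2 * δ * A * l2 (rst (T (j+2)) h) := this
  have hcross : - ∑ j ∈ Finset.range K, dotR (Ψ.mulVec (rst S01 h)) (Ψ.mulVec (rst (T (j+2)) h))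
      ≤ Real.sqrt 2 * δ * A * Sig2 := by
    have h1 : - ∑ j ∈ Finset.range K, dotR (Ψ.mulVec (rst S01 h)) (Ψ.mulVec (rst (T (j+2)) h))
        ≤ ∑ j ∈ Finset.range K, |dotR (Ψ.mulVec (rst S01 h)) (Ψ.mulVec (rst (T (j+2)) h))| := by
      rw [← Finset.sum_neg_distrib]
      exact Finset.sum_le_sum fun j _ => neg_le_abs _
    have h2 : ∑ j ∈ Finset.range K, |dotR (Ψ.mulVec (rst S01 h)) (Ψ.mulVec (rst (T (j+2)) h))|
        ≤ ∑ j ∈ Finset.range K, Real.sqrt 2 * δ * A * l2 (rst (T (j+2)) h) :=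
      Finset.sum_le_sum hd2
    have h3 : ∑ j ∈ Finset.range K, Real.sqrt 2 * δ * A * l2 (rst (T (j+2)) h)
        = Real.sqrt 2 * δ * A * Sig2 := by
      rw [hSig2, Finset.mul_sum]
    linarith
  -- master inequality
  have hmaster : (1 - δ) * A ^ 2
      ≤ Real.sqrt (1 + δ) * A * (2 * ε) + Real.sqrt 2 * δ * A * (A + 2 * E) := by
    have hrl : (1 - δ) * A ^ 2 ≤ l2sq (Ψ.mulVec (rst S01 h)) := by
      rw [← hA2]; exact hripS01.1
    have hcross2 : Real.sqrt 2 * δ * A * Sig2 ≤ Real.sqrt 2 * δ * A * (A + 2 * E) :=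
      mul_le_mul_of_nonneg_left hSig2A (by positivity)
    rw [hdot] at hrl
    linarith
  -- clean quadratic: d * A ≤ 2√(1+δ) ε + 2√2 δ E
  have hdA : d * A ≤ 2 * Real.sqrt (1 + δ) * ε + 2 * Real.sqrt 2 * δ * E := by
    rcases eq_or_lt_of_le hAnn with hA0 | hApos
    · rw [← hA0]
      have : 0 ≤ 2 * Real.sqrt (1 + δ) * ε := by positivity
      have : 0 ≤ 2 * Real.sqrt 2 * δ * E := by positivity
      linarith
    · have key : (d * A) * A ≤ (2 * Real.sqrt (1 + δ) * ε + 2 * Real.sqrt 2 * δ * E) * A := by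
        rw [hd_def]; nlinarith [hmaster]
      exact le_of_mul_le_mul_right key hApos
  -- final assembly
  have hLbound : l2 h ≤ A + Sig2 := by
    conv_lhs => rw [hsplit]
    have h1 := l2_add_le (rst S01 h) (∑ j ∈ Finset.range K, rst (T (j+2)) h)
    have h2 : l2 (∑ j ∈ Finset.range K, rst (T (j+2)) h)
        ≤ ∑ j ∈ Finset.range K, l2 (rst (T (j+2)) h) :=
      l2_sum_le (Finset.range K) _ (fun x y => l2_add_le x y)
    rw [hSig2]
    linarith
  have hAfin : A ≤ (2 * Real.sqrt (1 + δ) * ε + 2 * Real.sqrt 2 * δ * E) / d := by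
    rw [le_div_iff₀ hd]
    linarith [hdA]
  have hgoalE : (4 * Real.sqrt 2 * δ / d + 2) * e0 / Real.sqrt s
      = (4 * Real.sqrt 2 * δ / d + 2) * E := by
    rw [hE, mul_div_assoc]
  have hfieldeq : 2 * ((2 * Real.sqrt (1 + δ) * ε + 2 * Real.sqrt 2 * δ * E) / d)
      = (4 * Real.sqrt (1 + δ) / d) * ε + (4 * Real.sqrt 2 * δ / d) * E := by
    field_simp
    ring
  have hfinal : l2 h ≤ (4 * Real.sqrt 2 * δ / d + 2) * E + (4 * Real.sqrt (1 + δ) / d) * ε := by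
    have h1 : l2 h ≤ 2 * A + 2 * E := by linarith
    have h2 : 2 * A ≤ 2 * ((2 * Real.sqrt (1 + δ) * ε + 2 * Real.sqrt 2 * δ * E) / d) := by
      linarith
    rw [hfieldeq] at h2
    linarith
  rw [hgoalE]
  exact hfinal
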